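/- Let x > 0 and let (v_n) be a sequence of integers with v_n → ∞ and v_n/n → 0. With p_n(ℓ) = (v_n−1)·(n−v_n)!/(n−v_n−ℓ)!·(n−ℓ−2)!/(n−1)!, one has p_n(⌊x n / v_n⌋) · (n/v_n) → e^{−x} as n → ∞. -/

import Mathlib

open Filter
open Finset

lemma cast_descF {m k : ℕ} (h : k ≤ m) :
    ((m.descFactorial k : ℕ) : ℝ) = ∏ i ∈ Finset.range k, ((m : ℝ) - i) := by
  rw [Nat.descFactorial_eq_prod_range, Nat.cast_prod]
  refine Finset.prod_congr rfl fun i hi => ?_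
  have hi' : i ≤ m := le_trans (Finset.mem_range.mp hi).le h
  rw [Nat.cast_sub hi']

lemma aux_eq (n V L : ℕ) (h : L + V + 2 ≤ n) (hV : 2 ≤ V) :
    ((V : ℝ) - 1) * (Nat.factorial (n - V)) / (Nat.factorial (n - V - L))
        * (Nat.factorial (n - L - 2)) / (Nat.factorial (n - 1)) * ((n : ℝ) / (V : ℝ))
      = ((V : ℝ) - 1) / V * ((n : ℝ) / ((n : ℝ) - 1 - L))
          * ∏ i ∈ Finset.range L, (((n : ℝ) - V - i) / ((n : ℝ) - 1 - i)) := by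
  have h1 : L ≤ n - V := by omega
  have h2 : L + 1 ≤ n - 1 := by omega
  have hVn : V ≤ n := by omega
  have h1n : 1 ≤ n := by omega
  have hNr : (n : ℝ) ≥ (L : ℝ) + V + 2 := by exact_mod_cast h
  have hVr : (2 : ℝ) ≤ V := by exact_mod_cast hV
  have hL0 : (0 : ℝ) ≤ L := Nat.cast_nonneg _
  have c1 : (((n - V).descFactorial L : ℕ) : ℝ)
      = ∏ i ∈ Finset.range L, ((n : ℝ) - V - i) := by
    rw [cast_descF h1, Nat.cast_sub hVn]
  have c2 : (((n - 1).descFactorial (L + 1) : ℕ) : ℝ)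
      = (∏ i ∈ Finset.range L, ((n : ℝ) - 1 - i)) * ((n : ℝ) - 1 - L) := by
    rw [cast_descF h2, Nat.cast_sub h1n, Finset.prod_range_succ]
    norm_num
  have f1 : ((Nat.factorial (n - V) : ℕ) : ℝ)
      = (Nat.factorial (n - V - L) : ℝ) * ∏ i ∈ Finset.range L, ((n : ℝ) - V - i) := by
    rw [← c1, ← Nat.cast_mul, Nat.factorial_mul_descFactorial h1]
  have e3 : n - 1 - (L + 1) = n - L - 2 := by omega
  have f2 : ((Nat.factorial (n - 1) : ℕ) : ℝ)
      = (Nat.factorial (n - L - 2) : ℝ)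
          * ((∏ i ∈ Finset.range L, ((n : ℝ) - 1 - i)) * ((n : ℝ) - 1 - L)) := by
    rw [← c2, ← Nat.cast_mul, ← e3, Nat.factorial_mul_descFactorial h2]
  have hfac1 : ((Nat.factorial (n - V - L) : ℕ) : ℝ) ≠ 0 :=
    Nat.cast_ne_zero.mpr (Nat.factorial_ne_zero _)
  have hfac2 : ((Nat.factorial (n - L - 2) : ℕ) : ℝ) ≠ 0 :=
    Nat.cast_ne_zero.mpr (Nat.factorial_ne_zero _)
  have hprodpos : ∀ i ∈ Finset.range L, (0 : ℝ) < (n : ℝ) - 1 - i := by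
    intro i hi
    have : (i : ℝ) < L := by exact_mod_cast Finset.mem_range.mp hi
    linarith
  have hprod : (∏ i ∈ Finset.range L, ((n : ℝ) - 1 - i)) ≠ 0 :=
    ne_of_gt (Finset.prod_pos hprodpos)
  have hd : ((n : ℝ) - 1 - L) ≠ 0 := by
    have : (0:ℝ) < (n : ℝ) - 1 - L := by linarith
    exact ne_of_gt this
  have hV0 : (V : ℝ) ≠ 0 := by positivity
  rw [f1, f2, Finset.prod_div_distrib]
  field_simp

lemma aux_log (n V L : ℕ) (h : L + V + 2 ≤ n) (hV : 2 ≤ V) :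
    (0 : ℝ) < ∏ i ∈ Finset.range L, (((n : ℝ) - V - i) / ((n : ℝ) - 1 - i)) ∧
    -((L : ℝ) * ((V : ℝ) - 1) / ((n : ℝ) - V - L + 1)) ≤
      Real.log (∏ i ∈ Finset.range L, (((n : ℝ) - V - i) / ((n : ℝ) - 1 - i))) ∧
    Real.log (∏ i ∈ Finset.range L, (((n : ℝ) - V - i) / ((n : ℝ) - 1 - i))) ≤
      -((L : ℝ) * ((V : ℝ) - 1) / ((n : ℝ) - 1)) := by
  have hNr : (n : ℝ) ≥ (L : ℝ) + V + 2 := by exact_mod_cast h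
  have hVr : (2 : ℝ) ≤ V := by exact_mod_cast hV
  have hL0 : (0 : ℝ) ≤ L := Nat.cast_nonneg _
  have hia : ∀ i ∈ Finset.range L, (0 : ℝ) < (n : ℝ) - V - i ∧ (0 : ℝ) < (n : ℝ) - 1 - i ∧
      (i : ℝ) ≤ (L : ℝ) - 1 := by
    intro i hi
    have h1 : (i : ℝ) + 1 ≤ L := by exact_mod_cast Finset.mem_range.mp hi
    refine ⟨by linarith, by linarith, by linarith⟩
  have hpos : ∀ i ∈ Finset.range L, (0 : ℝ) < ((n : ℝ) - V - i) / ((n : ℝ) - 1 - i) := by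
    intro i hi
    obtain ⟨h1, h2, _⟩ := hia i hi
    exact div_pos h1 h2
  have hP : (0 : ℝ) < ∏ i ∈ Finset.range L, (((n : ℝ) - V - i) / ((n : ℝ) - 1 - i)) :=
    Finset.prod_pos hpos
  refine ⟨hP, ?_, ?_⟩
  · rw [Real.log_prod (fun i hi => ne_of_gt (hpos i hi))]
    have : ∀ i ∈ Finset.range L,
        -(((V : ℝ) - 1) / ((n : ℝ) - V - L + 1)) ≤
          Real.log (((n : ℝ) - V - i) / ((n : ℝ) - 1 - i)) := by
      intro i hi
      obtain ⟨h1, h2, h3⟩ := hia i hi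
      have key : Real.log (((n : ℝ) - 1 - i) / ((n : ℝ) - V - i)) ≤
          ((n : ℝ) - 1 - i) / ((n : ℝ) - V - i) - 1 :=
        Real.log_le_sub_one_of_pos (div_pos h2 h1)
      rw [Real.log_div (ne_of_gt h2) (ne_of_gt h1)] at key
      have e1 : ((n : ℝ) - 1 - i) / ((n : ℝ) - V - i) - 1 = ((V : ℝ) - 1) / ((n : ℝ) - V - i) := by
        field_simp
        ring
      rw [e1] at key
      rw [Real.log_div (ne_of_gt h1) (ne_of_gt h2)]
      have hle : ((V : ℝ) - 1) / ((n : ℝ) - V - i) ≤ ((V : ℝ) - 1) / ((n : ℝ) - V - L + 1) :=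
        div_le_div_of_nonneg_left (by linarith) (by linarith) (by linarith)
      linarith
    calc -((L : ℝ) * ((V : ℝ) - 1) / ((n : ℝ) - V - L + 1))
        = ∑ _i ∈ Finset.range L, -(((V : ℝ) - 1) / ((n : ℝ) - V - L + 1)) := by
          rw [Finset.sum_const, Finset.card_range]; push_cast; ring
      _ ≤ _ := Finset.sum_le_sum this
  · rw [Real.log_prod (fun i hi => ne_of_gt (hpos i hi))]
    have : ∀ i ∈ Finset.range L,
        Real.log (((n : ℝ) - V - i) / ((n : ℝ) - 1 - i)) ≤
          -(((V : ℝ) - 1) / ((n : ℝ) - 1)) := by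
      intro i hi
      obtain ⟨h1, h2, h3⟩ := hia i hi
      have key : Real.log (((n : ℝ) - V - i) / ((n : ℝ) - 1 - i)) ≤
          ((n : ℝ) - V - i) / ((n : ℝ) - 1 - i) - 1 :=
        Real.log_le_sub_one_of_pos (div_pos h1 h2)
      have e1 : ((n : ℝ) - V - i) / ((n : ℝ) - 1 - i) - 1
          = -(((V : ℝ) - 1) / ((n : ℝ) - 1 - i)) := by
        field_simp
        ring
      rw [e1] at key
      have hle : ((V : ℝ) - 1) / ((n : ℝ) - 1) ≤ ((V : ℝ) - 1) / ((n : ℝ) - 1 - i) :=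
        div_le_div_of_nonneg_left (by linarith) (by linarith) (by linarith)
      linarith
    calc _ ≤ ∑ _i ∈ Finset.range L, -(((V : ℝ) - 1) / ((n : ℝ) - 1)) := Finset.sum_le_sum this
      _ = -((L : ℝ) * ((V : ℝ) - 1) / ((n : ℝ) - 1)) := by
          rw [Finset.sum_const, Finset.card_range]; push_cast; ring

lemma tendsto_ratio (f : ℕ → ℝ)
    (hf : Tendsto (fun n : ℕ => f n / (n : ℝ)) atTop (nhds 1)) :
    Tendsto (fun n : ℕ => (n : ℝ) / f n) atTop (nhds 1) := by
  have := hf.inv₀ one_ne_zero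
  simpa [inv_div] using this

lemma my_div_cancel (a b c : ℝ) (hc : c ≠ 0) : a / c * (c / b) = a / b := by
  rw [div_mul_div_comm, mul_comm c b, mul_div_mul_right _ _ hc]

/-- Local limit theorem for the beta-binomial distribution: for `x > 0` and
`v_n → ∞` with `v_n/n → 0`, with
`p_n(ℓ) = (v_n−1)·(n−v_n)!/(n−v_n−ℓ)!·(n−ℓ−2)!/(n−1)!`, one has
`p_n(⌊x n / v_n⌋) · (n/v_n) → e^{−x}`. -/
theorem stmt_12 (x : ℝ) (hx : 0 < x) (v : ℕ → ℕ)
    (hv : Tendsto v atTop atTop)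
    (hvn : Tendsto (fun n : ℕ => (v n : ℝ) / n) atTop (nhds 0)) :
    Tendsto (fun n : ℕ =>
        (((v n : ℝ) - 1) * (Nat.factorial (n - v n))
            / (Nat.factorial (n - v n - ⌊x * n / v n⌋₊))
            * (Nat.factorial (n - ⌊x * n / v n⌋₊ - 2)) / (Nat.factorial (n - 1)))
          * (n / (v n : ℝ)))
      atTop (nhds (Real.exp (-x))) := by
  set l : ℕ → ℕ := fun n => ⌊x * n / v n⌋₊ with hldef
  have hone : Tendsto (fun _ : ℕ => (1 : ℝ)) atTop (nhds 1) := tendsto_const_nhds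
  have hv' : Tendsto (fun n => (v n : ℝ)) atTop atTop :=
    tendsto_natCast_atTop_atTop.comp hv
  have hinvv : Tendsto (fun n : ℕ => 1 / (v n : ℝ)) atTop (nhds 0) := by
    simpa [one_div, Pi.inv_def] using hv'.inv_tendsto_atTop
  have hinvn : Tendsto (fun n : ℕ => 1 / (n : ℝ)) atTop (nhds 0) :=
    tendsto_one_div_atTop_nhds_zero_nat
  have hxov : Tendsto (fun n : ℕ => x / (v n : ℝ)) atTop (nhds 0) :=
    Tendsto.div_atTop tendsto_const_nhds hv'
  have hfl : ∀ n, (l n : ℝ) ≤ x * n / v n := fun n =>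
    Nat.floor_le (by positivity)
  have hln : Tendsto (fun n : ℕ => (l n : ℝ) / n) atTop (nhds 0) := by
    apply tendsto_of_tendsto_of_tendsto_of_le_of_le' tendsto_const_nhds hxov
    · exact Eventually.of_forall fun n => by positivity
    · filter_upwards [eventually_gt_atTop 0] with n hn
      have hn' : (0 : ℝ) < n := by exact_mod_cast hn
      have hn0 : ((n : ℝ)) ≠ 0 := ne_of_gt hn'
      calc (l n : ℝ) / n ≤ (x * n / v n) / n := by gcongr; exact hfl n
        _ = x / v n := by rw [div_right_comm, mul_div_cancel_right₀ _ hn0]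
  have hlv : Tendsto (fun n : ℕ => (l n : ℝ) * v n / n) atTop (nhds x) := by
    apply tendsto_of_tendsto_of_tendsto_of_le_of_le'
      (g := fun n : ℕ => x - (v n : ℝ) / n) (h := fun _ : ℕ => x)
    · simpa using tendsto_const_nhds.sub hvn
    · exact tendsto_const_nhds
    · filter_upwards [eventually_gt_atTop 0, hv.eventually_ge_atTop 1] with n hn hvn1
      have hn' : (0 : ℝ) < n := by exact_mod_cast hn
      have hn0 : ((n : ℝ)) ≠ 0 := ne_of_gt hn'
      have hv1 : (0 : ℝ) < v n := by exact_mod_cast hvn1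
      have hv0 : ((v n : ℝ)) ≠ 0 := ne_of_gt hv1
      have hfloor : x * n / v n - 1 < l n := Nat.sub_one_lt_floor _
      have e : (x * n / v n - 1) * v n / n = x - v n / n := by field_simp
      calc x - (v n : ℝ) / n = (x * n / v n - 1) * v n / n := e.symm
        _ ≤ (l n : ℝ) * v n / n := by gcongr
    · filter_upwards [eventually_gt_atTop 0, hv.eventually_ge_atTop 1] with n hn hvn1
      have hn' : (0 : ℝ) < n := by exact_mod_cast hn
      have hn0 : ((n : ℝ)) ≠ 0 := ne_of_gt hn'
      have hv1 : (0 : ℝ) < v n := by exact_mod_cast hvn1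
      have hv0 : ((v n : ℝ)) ≠ 0 := ne_of_gt hv1
      calc (l n : ℝ) * v n / n ≤ (x * n / v n) * v n / n := by gcongr; exact hfl n
        _ = x := by field_simp
  have hlv1 : Tendsto (fun n : ℕ => (l n : ℝ) * ((v n : ℝ) - 1) / n) atTop (nhds x) := by
    have h := hlv.sub hln
    rw [sub_zero] at h
    apply h.congr
    intro n
    rw [← sub_div]
    ring_nf
  have hE : ∀ᶠ n in atTop, 2 ≤ v n ∧ l n + v n + 2 ≤ n := by
    have hsum : Tendsto (fun n : ℕ => ((l n : ℝ) + v n + 2) / n) atTop (nhds 0) := by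
      have h2 : Tendsto (fun n : ℕ => (2 : ℝ) / n) atTop (nhds 0) := by
        simpa [mul_one_div, div_eq_mul_inv] using hinvn.const_mul (2 : ℝ)
      have h := (hln.add hvn).add h2
      rw [add_zero, add_zero] at h
      apply h.congr
      intro n
      rw [add_div, add_div]
    filter_upwards [hv.eventually_ge_atTop 2, eventually_gt_atTop 0,
        hsum.eventually_lt_const one_pos] with n h1 h2 h3
    refine ⟨h1, ?_⟩
    have hn' : (0 : ℝ) < n := by exact_mod_cast h2
    have hlt : ((l n : ℝ) + v n + 2) < n := (div_lt_one hn').mp h3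
    have : l n + v n + 2 < n := by exact_mod_cast hlt
    omega
  set P : ℕ → ℝ := fun n =>
    ∏ i ∈ Finset.range (l n), (((n : ℝ) - v n - i) / ((n : ℝ) - 1 - i)) with hPdef
  have hrat1 : Tendsto (fun n : ℕ => (n : ℝ) / ((n : ℝ) - 1)) atTop (nhds 1) := by
    apply tendsto_ratio
    have h := hone.sub hinvn
    rw [sub_zero] at h
    apply h.congr'
    filter_upwards [eventually_gt_atTop 0] with n hn
    have hn0 : ((n : ℝ)) ≠ 0 := by positivity
    field_simp
  have hrat2 : Tendsto (fun n : ℕ => (n : ℝ) / ((n : ℝ) - v n - l n + 1)) atTop (nhds 1) := by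
    apply tendsto_ratio
    have h0 : Tendsto (fun n : ℕ => 1 - (v n : ℝ) / n - (l n : ℝ) / n + 1 / n)
        atTop (nhds 1) := by
      have h := ((hone.sub hvn).sub hln).add hinvn
      simpa using h
    apply h0.congr'
    filter_upwards [eventually_gt_atTop 0] with n hn
    have hn0 : ((n : ℝ)) ≠ 0 := by positivity
    field_simp
  have hb : Tendsto (fun n : ℕ => (l n : ℝ) * ((v n : ℝ) - 1) / ((n : ℝ) - v n - l n + 1))
      atTop (nhds x) := by
    have h := hlv1.mul hrat2
    rw [mul_one] at h
    apply h.congr'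
    filter_upwards [eventually_gt_atTop 0] with n hn
    have hn0 : ((n : ℝ)) ≠ 0 := by positivity
    exact my_div_cancel _ _ _ hn0
  have ha : Tendsto (fun n : ℕ => (l n : ℝ) * ((v n : ℝ) - 1) / ((n : ℝ) - 1))
      atTop (nhds x) := by
    have h := hlv1.mul hrat1
    rw [mul_one] at h
    apply h.congr'
    filter_upwards [eventually_gt_atTop 0] with n hn
    have hn0 : ((n : ℝ)) ≠ 0 := by positivity
    exact my_div_cancel _ _ _ hn0
  have hlog : Tendsto (fun n : ℕ => Real.log (P n)) atTop (nhds (-x)) := by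
    apply tendsto_of_tendsto_of_tendsto_of_le_of_le' hb.neg ha.neg
    · filter_upwards [hE] with n hn
      exact (aux_log n (v n) (l n) hn.2 hn.1).2.1
    · filter_upwards [hE] with n hn
      exact (aux_log n (v n) (l n) hn.2 hn.1).2.2
  have hP : Tendsto P atTop (nhds (Real.exp (-x))) := by
    have h := (Real.continuous_exp.tendsto (-x)).comp hlog
    apply h.congr'
    filter_upwards [hE] with n hn
    exact Real.exp_log (aux_log n (v n) (l n) hn.2 hn.1).1
  have h1 : Tendsto (fun n : ℕ => ((v n : ℝ) - 1) / v n) atTop (nhds 1) := by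
    have h := hone.sub hinvv
    rw [sub_zero] at h
    apply h.congr'
    filter_upwards [hv.eventually_ge_atTop 1] with n hn
    have hv0 : ((v n : ℝ)) ≠ 0 := by
      have : (0:ℝ) < v n := by exact_mod_cast hn
      exact ne_of_gt this
    field_simp
  have h2 : Tendsto (fun n : ℕ => (n : ℝ) / ((n : ℝ) - 1 - l n)) atTop (nhds 1) := by
    apply tendsto_ratio
    have h0 : Tendsto (fun n : ℕ => 1 - 1 / (n : ℝ) - (l n : ℝ) / n) atTop (nhds 1) := by
      have h := (hone.sub hinvn).sub hln
      simpa using h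
    apply h0.congr'
    filter_upwards [eventually_gt_atTop 0] with n hn
    have hn0 : ((n : ℝ)) ≠ 0 := by positivity
    field_simp
  have hfinal := (h1.mul h2).mul hP
  rw [one_mul, one_mul] at hfinal
  apply hfinal.congr'
  filter_upwards [hE] with n hn
  exact (aux_eq n (v n) (l n) hn.2 hn.1).symm
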